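/- arXiv:0707.1148 — 7 statements merged into one kernel-verified Lean document; each statement's English description precedes it below -/
import Mathlib

section
/- Local-global principle for graded modules: Let R be a ℤ-graded, graded-commutative ring and let M be a graded left R-module. Then the following are equivalent: (1) M = 0; (2) for every graded prime ideal 𝔭 of R and every x ∈ M there exists a homogeneous element s ∈ R with s ∉ 𝔭 and s • x = 0; (3) for every graded maximal ideal 𝔪 of R and every x ∈ M there exists a homogeneous element s ∈ R with s ∉ 𝔪 and s • x = 0. (Conditions (2) and (3) express exactly that the localization of M at the multiplicative set of homogeneous elements outside 𝔭, respectively outside 𝔪, vanishes.) -/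
/-- A ℤ-graded ring `R` (graded by `𝒜 : ℤ → AddSubgroup R`) is *graded-commutative* if
for all homogeneous `r ∈ 𝒜 i` and `s ∈ 𝒜 j` one has `r * s = s * r` when `i * j` is even
and `r * s = -(s * r)` when `i * j` is odd. -/
def IsGradedComm {R : Type*} [Ring R] (𝒜 : ℤ → AddSubgroup R) : Prop :=
  ∀ ⦃i j : ℤ⦄ ⦃r s : R⦄, r ∈ 𝒜 i → s ∈ 𝒜 j →
    (Even (i * j) → r * s = s * r) ∧ (¬ Even (i * j) → r * s = -(s * r))

section Aux

open GradedRing DirectSum SetLike Finset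

variable {R : Type*} [Ring R] (𝒜 : ℤ → AddSubgroup R) [GradedRing 𝒜]

/-- For homogeneous `a ∈ I` (any ideal) and homogeneous `b`, `a * b ∈ I`. -/
lemma IsGradedComm.homog_mul_mem (hcomm : IsGradedComm 𝒜) {I : Ideal R}
    {i j : ℤ} {a b : R} (ha : a ∈ 𝒜 i) (hb : b ∈ 𝒜 j) (haI : a ∈ I) : a * b ∈ I := by
  obtain ⟨h1, h2⟩ := hcomm ha hb
  by_cases h : Even (i * j)
  · rw [h1 h]; exact I.mul_mem_left b haI
  · rw [h2 h]; exact I.neg_mem (I.mul_mem_left b haI)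

/-- A homogeneous (left) ideal is closed under right multiplication by a homogeneous
element. -/
lemma IsGradedComm.mul_homog_mem (hcomm : IsGradedComm 𝒜) {I : Ideal R}
    (hI : I.IsHomogeneous 𝒜) {m : R} (hm : m ∈ I) {j : ℤ} {b : R} (hb : b ∈ 𝒜 j) :
    m * b ∈ I := by
  classical
  rw [← DirectSum.sum_support_decompose 𝒜 m, Finset.sum_mul]
  exact Ideal.sum_mem _ fun i _ =>
    hcomm.homog_mul_mem 𝒜 (SetLike.coe_mem _) hb (hI i hm)

/-- A proper homogeneous ideal satisfying the prime property on homogeneous elements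
satisfies it for all elements. -/
lemma IsGradedComm.mem_or_mem (hcomm : IsGradedComm 𝒜) {I : Ideal R}
    (hI : I.IsHomogeneous 𝒜)
    (homogeneous_mem_or_mem :
      ∀ {x y : R}, IsHomogeneousElem 𝒜 x → IsHomogeneousElem 𝒜 y → x * y ∈ I → x ∈ I ∨ y ∈ I) :
    ∀ x y : R, x * y ∈ I → x ∈ I ∨ y ∈ I := by
  intro x y hxy
  by_contra! rid
  obtain ⟨rid₁, rid₂⟩ := rid
  classical
  set set₁ := {i ∈ (decompose 𝒜 x).support | proj 𝒜 i x ∉ I} with set₁_eq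
  set set₂ := {i ∈ (decompose 𝒜 y).support | proj 𝒜 i y ∉ I} with set₂_eq
  have nonempty :
      ∀ x : R, x ∉ I → {i ∈ (decompose 𝒜 x).support | proj 𝒜 i x ∉ I}.Nonempty := by
    intro x hx
    rw [filter_nonempty_iff]
    contrapose! hx
    simp_rw [proj_apply] at hx
    rw [← sum_support_decompose 𝒜 x]
    exact Ideal.sum_mem _ hx
  set max₁ := set₁.max' (nonempty x rid₁)
  set max₂ := set₂.max' (nonempty y rid₂)
  have mem_max₁ : max₁ ∈ set₁ := max'_mem set₁ (nonempty x rid₁)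
  have mem_max₂ : max₂ ∈ set₂ := max'_mem set₂ (nonempty y rid₂)
  replace hxy : proj 𝒜 (max₁ + max₂) (x * y) ∈ I := hI _ hxy
  have mem_I : proj 𝒜 max₁ x * proj 𝒜 max₂ y ∈ I := by
    set antidiag :=
      {z ∈ (decompose 𝒜 x).support ×ˢ (decompose 𝒜 y).support | z.1 + z.2 = max₁ + max₂}
        with ha
    have mem_antidiag : (max₁, max₂) ∈ antidiag := by
      simp only [antidiag, add_sum_erase, mem_filter, mem_product]
      exact ⟨⟨mem_of_mem_filter _ mem_max₁, mem_of_mem_filter _ mem_max₂⟩, trivial⟩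
    have eq_add_sum :=
      calc
        proj 𝒜 (max₁ + max₂) (x * y) = ∑ ij ∈ antidiag, proj 𝒜 ij.1 x * proj 𝒜 ij.2 y := by
          simp_rw [ha, proj_apply, DirectSum.decompose_mul, DirectSum.coe_mul_apply 𝒜]
        _ =
            proj 𝒜 max₁ x * proj 𝒜 max₂ y +
              ∑ ij ∈ antidiag.erase (max₁, max₂), proj 𝒜 ij.1 x * proj 𝒜 ij.2 y :=
          (add_sum_erase _ _ mem_antidiag).symm
    rw [eq_sub_of_add_eq eq_add_sum.symm]
    refine Ideal.sub_mem _ hxy (Ideal.sum_mem _ fun z H => ?_)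
    rcases z with ⟨i, j⟩
    simp only [antidiag, mem_erase, Prod.mk.injEq, Ne, mem_filter, mem_product] at H
    rcases H with ⟨H₁, ⟨H₂, H₃⟩, H₄⟩
    have max_lt : max₁ < i ∨ max₂ < j := by
      rcases lt_trichotomy max₁ i with (h | rfl | h)
      · exact Or.inl h
      · refine False.elim (H₁ ⟨rfl, add_left_cancel H₄⟩)
      · apply Or.inr
        have : i + j < max₁ + j := by omega
        rw [H₄] at this
        exact lt_of_add_lt_add_left this
    cases' max_lt with max_lt max_lt
    · have not_mem : i ∉ set₁ := fun h =>
        lt_irrefl _ ((max'_lt_iff set₁ (nonempty x rid₁)).mp max_lt i h)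
      rw [set₁_eq] at not_mem
      simp only [not_and, Classical.not_not, Ne, mem_filter] at not_mem
      rw [proj_apply, proj_apply]
      exact hcomm.homog_mul_mem 𝒜 (SetLike.coe_mem _) (SetLike.coe_mem _)
        (by rw [← proj_apply]; exact not_mem H₂)
    · have not_mem : j ∉ set₂ := fun h =>
        lt_irrefl _ ((max'_lt_iff set₂ (nonempty y rid₂)).mp max_lt j h)
      rw [set₂_eq] at not_mem
      simp only [not_and, Classical.not_not, Ne, mem_filter] at not_mem
      exact Ideal.mul_mem_left I _ (not_mem H₃)
  have not_mem_I : proj 𝒜 max₁ x * proj 𝒜 max₂ y ∉ I := by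
    have neither_mem : proj 𝒜 max₁ x ∉ I ∧ proj 𝒜 max₂ y ∉ I := by
      rw [mem_filter] at mem_max₁ mem_max₂
      exact ⟨mem_max₁.2, mem_max₂.2⟩
    intro _rid
    cases' homogeneous_mem_or_mem ⟨max₁, SetLike.coe_mem _⟩ ⟨max₂, SetLike.coe_mem _⟩ mem_I
      with h h
    · exact neither_mem.1 h
    · exact neither_mem.2 h
  exact not_mem_I mem_I

/-- Every proper homogeneous ideal is contained in a graded-maximal ideal. -/
lemma exists_graded_maximal {I : Ideal R} (hI : I.IsHomogeneous 𝒜) (hne : I ≠ ⊤) :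
    ∃ 𝔪 : Ideal R, 𝔪.IsHomogeneous 𝒜 ∧ 𝔪 ≠ ⊤ ∧ I ≤ 𝔪 ∧
      ∀ J : Ideal R, J.IsHomogeneous 𝒜 → 𝔪 ≤ J → J ≠ ⊤ → J = 𝔪 := by
  obtain ⟨𝔪, hle, ⟨h1, h2⟩, hmax⟩ :=
    zorn_le_nonempty₀ {J : Ideal R | J.IsHomogeneous 𝒜 ∧ J ≠ ⊤}
      (fun c hc hchain y hy => by
        refine ⟨sSup c, ⟨?_, ?_⟩, fun z hz => le_sSup hz⟩
        · intro i r hr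
          obtain ⟨J, hJc, hrJ⟩ :=
            (Submodule.mem_sSup_of_directed ⟨y, hy⟩ hchain.directedOn).1 hr
          exact le_sSup hJc ((hc hJc).1 i hrJ)
        · intro htop
          have h1 : (1 : R) ∈ sSup c := htop ▸ Submodule.mem_top
          obtain ⟨J, hJc, hrJ⟩ :=
            (Submodule.mem_sSup_of_directed ⟨y, hy⟩ hchain.directedOn).1 h1
          exact (hc hJc).2 ((Ideal.eq_top_iff_one J).2 hrJ))
      I ⟨hI, hne⟩
  exact ⟨𝔪, h1, h2, hle, fun J hJ hmJ hJtop => le_antisymm (hmax ⟨hJ, hJtop⟩ hmJ) hmJ⟩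

/-- A graded-maximal ideal satisfies the prime condition. -/
lemma graded_maximal_prime (hcomm : IsGradedComm 𝒜) {𝔪 : Ideal R}
    (h1 : 𝔪.IsHomogeneous 𝒜) (h2 : 𝔪 ≠ ⊤)
    (hmax : ∀ J : Ideal R, J.IsHomogeneous 𝒜 → 𝔪 ≤ J → J ≠ ⊤ → J = 𝔪) :
    ∀ a b : R, a * b ∈ 𝔪 → a ∈ 𝔪 ∨ b ∈ 𝔪 := by
  refine hcomm.mem_or_mem 𝒜 h1 ?_
  rintro a b ⟨i, ha⟩ ⟨j, hb⟩ hab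
  by_cases haI : a ∈ 𝔪
  · exact Or.inl haI
  right
  set J : Ideal R := 𝔪 ⊔ Ideal.span {a} with hJ
  have hJhom : J.IsHomogeneous 𝒜 :=
    h1.sup (Ideal.homogeneous_span 𝒜 {a} (by rintro x rfl; exact ⟨i, ha⟩))
  have haJ : a ∈ J := Ideal.mem_sup_right (Ideal.subset_span rfl)
  have hJtop : J = ⊤ := by
    by_contra hJt
    exact haI ((hmax J hJhom le_sup_left hJt) ▸ haJ)
  have h1J : (1 : R) ∈ J := hJtop ▸ Submodule.mem_top
  obtain ⟨m, hm, t, ht, hmt⟩ := Submodule.mem_sup.1 h1J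
  obtain ⟨r, hr⟩ := Submodule.mem_span_singleton.1 ht
  have : b = m * b + r * (a * b) := by
    rw [smul_eq_mul] at hr
    rw [← mul_assoc, hr, ← add_mul, hmt, one_mul]
  rw [this]
  exact Ideal.add_mem _ (hcomm.mul_homog_mem 𝒜 h1 hm hb) (𝔪.mul_mem_left r hab)

end Aux

/-- **Local-global principle for graded modules.**  Let `R` be a ℤ-graded, graded-commutative
ring and `M` a graded left `R`-module (graded by `ℳ : ℤ → AddSubgroup M` compatible with the
grading of `R`).  The following are equivalent:
(1) `M = 0`;
(2) for every graded prime ideal `𝔭` the localization of `M` at the homogeneous elements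
    outside `𝔭` vanishes, i.e. every `x ∈ M` is annihilated by some homogeneous `s ∉ 𝔭`;
(3) the same condition for every graded maximal ideal `𝔪`. -/
theorem graded_module_local_global_principle {R : Type*} [Ring R]
    (𝒜 : ℤ → AddSubgroup R) [GradedRing 𝒜] (hcomm : IsGradedComm 𝒜)
    {M : Type*} [AddCommGroup M] [Module R M] (ℳ : ℤ → AddSubgroup M)
    [DirectSum.Decomposition ℳ] [SetLike.GradedSMul 𝒜 ℳ] :
    List.TFAE
      [∀ x : M, x = 0,
       ∀ 𝔭 : Ideal R, 𝔭 ≠ ⊤ → Ideal.IsHomogeneous 𝒜 𝔭 →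
          (∀ a b : R, a * b ∈ 𝔭 → a ∈ 𝔭 ∨ b ∈ 𝔭) →
          ∀ x : M, ∃ s : R, SetLike.IsHomogeneousElem 𝒜 s ∧ s ∉ 𝔭 ∧ s • x = 0,
       ∀ 𝔪 : Ideal R, 𝔪 ≠ ⊤ → Ideal.IsHomogeneous 𝒜 𝔪 →
          (∀ J : Ideal R, Ideal.IsHomogeneous 𝒜 J → 𝔪 ≤ J → J ≠ ⊤ → J = 𝔪) →
          ∀ x : M, ∃ s : R, SetLike.IsHomogeneousElem 𝒜 s ∧ s ∉ 𝔪 ∧ s • x = 0] := by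
  have key : ∀ x : M, x ≠ 0 →
      ∃ 𝔪 : Ideal R, 𝔪.IsHomogeneous 𝒜 ∧ 𝔪 ≠ ⊤ ∧
        (∀ J : Ideal R, Ideal.IsHomogeneous 𝒜 J → 𝔪 ≤ J → J ≠ ⊤ → J = 𝔪) ∧
        ∀ s : R, SetLike.IsHomogeneousElem 𝒜 s → s • x = 0 → s ∈ 𝔪 := by
    intro x hx
    set I : Ideal R := Ideal.span {s : R | SetLike.IsHomogeneousElem 𝒜 s ∧ s • x = 0} with hIdef
    have hIhom : I.IsHomogeneous 𝒜 := Ideal.homogeneous_span 𝒜 _ fun r hr => hr.1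
    have hIle : I ≤ Ideal.torsionOf R M x :=
      Ideal.span_le.2 fun r hr => (Ideal.mem_torsionOf_iff x r).2 hr.2
    have hItop : I ≠ ⊤ := by
      intro htop
      have : (1 : R) ∈ Ideal.torsionOf R M x := hIle (htop ▸ Submodule.mem_top)
      rw [Ideal.mem_torsionOf_iff, one_smul] at this
      exact hx this
    obtain ⟨𝔪, hm1, hm2, hm3, hm4⟩ := exists_graded_maximal 𝒜 hIhom hItop
    exact ⟨𝔪, hm1, hm2, hm4, fun s hs hsx => hm3 (Ideal.subset_span ⟨hs, hsx⟩)⟩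
  have one_mem : SetLike.IsHomogeneousElem 𝒜 (1 : R) := ⟨0, SetLike.GradedOne.one_mem⟩
  tfae_have 1 → 2 := by
    intro h 𝔭 hne _ _ x
    exact ⟨1, one_mem, fun h1 => hne ((Ideal.eq_top_iff_one 𝔭).2 h1),
      by rw [h x, smul_zero]⟩
  tfae_have 1 → 3 := by
    intro h 𝔪 hne _ _ x
    exact ⟨1, one_mem, fun h1 => hne ((Ideal.eq_top_iff_one 𝔪).2 h1),
      by rw [h x, smul_zero]⟩
  tfae_have 2 → 1 := by
    intro h x
    by_contra hx
    obtain ⟨𝔪, hm1, hm2, hm3, hm4⟩ := key x hx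
    obtain ⟨s, hs, hsm, hsx⟩ :=
      h 𝔪 hm2 hm1 (graded_maximal_prime 𝒜 hcomm hm1 hm2 hm3) x
    exact hsm (hm4 s hs hsx)
  tfae_have 3 → 1 := by
    intro h x
    by_contra hx
    obtain ⟨𝔪, hm1, hm2, hm3, hm4⟩ := key x hx
    obtain ⟨s, hs, hsm, hsx⟩ := h 𝔪 hm2 hm1 hm3 x
    exact hsm (hm4 s hs hsx)
  tfae_finish
end

section
/- Let R be a ℤ-graded, graded-commutative ring and let S be a submonoid of R all of whose elements are homogeneous. Then S satisfies the right Ore conditions: (O1) for every s ∈ S and r ∈ R there exist s' ∈ S and r' ∈ R with s*r' = r*s'; and (O2) for every r ∈ R and s ∈ S with s*r = 0 there exists s' ∈ S with r*s' = 0. Symmetrically, S also satisfies the left Ore conditions. In particular, the right ring of fractions R[S⁻¹] (the Ore localization of R at S) exists. -/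
/-- The square of a homogeneous element is central. -/
lemma sq_central {R : Type*} [Ring R] (𝒜 : ℤ → AddSubgroup R) [GradedRing 𝒜]
    (hcomm : IsGradedComm 𝒜) {i : ℤ} {s : R} (hs : s ∈ 𝒜 i) (r : R) :
    (s * s) * r = r * (s * s) := by
  have hss : s * s ∈ 𝒜 (i + i) := SetLike.mul_mem_graded hs hs
  induction r using DirectSum.Decomposition.inductionOn 𝒜 with
  | zero => simp
  | homogeneous m =>
    rename_i j
    obtain ⟨m, hm⟩ := m
    have := (hcomm hss hm).1 ⟨i * j, by ring⟩
    simpa using this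
  | add a b ha hb => rw [mul_add, add_mul, ha, hb]

/-- Let `R` be a ℤ-graded, graded-commutative ring and `S` a submonoid of `R` consisting of
homogeneous elements.  Then `S` satisfies the right Ore conditions (O1) and (O2), and
symmetrically the left Ore conditions; in particular the Ore localization (ring of
fractions) of `R` at `S` exists. -/
theorem homogeneous_submonoid_is_ore {R : Type*} [Ring R]
    (𝒜 : ℤ → AddSubgroup R) [GradedRing 𝒜] (hcomm : IsGradedComm 𝒜)
    (S : Submonoid R) (hS : ∀ s ∈ S, SetLike.IsHomogeneousElem 𝒜 s) :
    -- right Ore condition (O1)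
    (∀ s ∈ S, ∀ r : R, ∃ s' ∈ S, ∃ r' : R, s * r' = r * s') ∧
    -- right Ore condition (O2)
    (∀ r : R, ∀ s ∈ S, s * r = 0 → ∃ s' ∈ S, r * s' = 0) ∧
    -- left Ore condition (O1)
    (∀ s ∈ S, ∀ r : R, ∃ s' ∈ S, ∃ r' : R, r' * s = s' * r) ∧
    -- left Ore condition (O2)
    (∀ r : R, ∀ s ∈ S, r * s = 0 → ∃ s' ∈ S, s' * r = 0) ∧
    -- the Ore localization of `R` at `S` exists
    Nonempty (OreLocalization.OreSet S) := by
  have central : ∀ s ∈ S, ∀ r : R, (s * s) * r = r * (s * s) := by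
    intro s hsS r
    obtain ⟨i, hi⟩ := hS s hsS
    exact sq_central 𝒜 hcomm hi r
  have o1r : ∀ s ∈ S, ∀ r : R, ∃ s' ∈ S, ∃ r' : R, s * r' = r * s' := by
    intro s hsS r
    exact ⟨s * s, mul_mem hsS hsS, s * r, by rw [← central s hsS r, mul_assoc]⟩
  have o2r : ∀ r : R, ∀ s ∈ S, s * r = 0 → ∃ s' ∈ S, r * s' = 0 := by
    intro r s hsS h
    exact ⟨s * s, mul_mem hsS hsS, by rw [← central s hsS r, mul_assoc, h, mul_zero]⟩
  have o1l : ∀ s ∈ S, ∀ r : R, ∃ s' ∈ S, ∃ r' : R, r' * s = s' * r := by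
    intro s hsS r
    exact ⟨s * s, mul_mem hsS hsS, r * s, by rw [central s hsS r, mul_assoc]⟩
  have o2l : ∀ r : R, ∀ s ∈ S, r * s = 0 → ∃ s' ∈ S, s' * r = 0 := by
    intro r s hsS h
    exact ⟨s * s, mul_mem hsS hsS, by rw [central s hsS r, ← mul_assoc, h, zero_mul]⟩
  refine ⟨o1r, o2r, o1l, o2l, ?_⟩
  have hnum : ∀ (r : R) (s : S), ∃ p : R × S, (p.2 : R) * r = p.1 * (s : R) := by
    intro r s
    obtain ⟨s', hs', r', hr'⟩ := o1l s s.2 r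
    exact ⟨⟨r', ⟨s', hs'⟩⟩, hr'.symm⟩
  choose p hp using hnum
  refine ⟨{ ore_right_cancel := ?_, oreNum := fun r s => (p r s).1,
            oreDenom := fun r s => (p r s).2, ore_eq := hp }⟩
  intro r₁ r₂ s h
  have h0 : (r₁ - r₂) * (s : R) = 0 := by rw [sub_mul, h, sub_self]
  obtain ⟨s', hs', hs'0⟩ := o2l (r₁ - r₂) s s.2 h0
  exact ⟨⟨s', hs'⟩, by have := hs'0; rw [mul_sub, sub_eq_zero] at this; exact this⟩
end

section
/- Let R be a ℤ-graded, graded-commutative ring, let S be a submonoid of R consisting of homogeneous elements, and let S_ev := {s ∈ S | s is homogeneous of even degree}, which is a submonoid of R. Then the canonical ring homomorphism from the Ore localization R[S_ev⁻¹] to the Ore localization R[S⁻¹] — that is, the unique ring homomorphism commuting with the canonical maps from R — is bijective; hence R[S⁻¹] ≅ R[S_ev⁻¹] as rings. -/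
/-- The submonoid `S_ev` of all elements of `S` that are homogeneous of even degree. -/
def evenPart {R : Type*} [Ring R] (𝒜 : ℤ → AddSubgroup R) [GradedRing 𝒜]
    (S : Submonoid R) : Submonoid R where
  carrier := {s : R | s ∈ S ∧ ∃ i : ℤ, Even i ∧ s ∈ 𝒜 i}
  one_mem' := ⟨S.one_mem, 0, Even.zero, SetLike.one_mem_graded 𝒜⟩
  mul_mem' := by
    rintro a b ⟨haS, i, hi, hai⟩ ⟨hbS, j, hj, hbj⟩
    exact ⟨S.mul_mem haS hbS, i + j, hi.add hj, SetLike.mul_mem_graded hai hbj⟩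

open OreLocalization in
/-- Let `R` be a ℤ-graded, graded-commutative ring, `S` a submonoid of homogeneous elements
and `S_ev ⊆ S` the submonoid of even-degree elements.  The canonical ring homomorphism
`R[S_ev⁻¹] → R[S⁻¹]` (the unique ring homomorphism commuting with the canonical maps
from `R`) is bijective. -/
theorem oreLocalization_evenPart_bijective {R : Type*} [Ring R]
    (𝒜 : ℤ → AddSubgroup R) [GradedRing 𝒜] (hcomm : IsGradedComm 𝒜)
    (S : Submonoid R) (hS : ∀ s ∈ S, SetLike.IsHomogeneousElem 𝒜 s)
    [OreLocalization.OreSet S] [OreLocalization.OreSet (evenPart 𝒜 S)] :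
    ∃ φ : OreLocalization (evenPart 𝒜 S) R →+* OreLocalization S R,
      φ.comp OreLocalization.numeratorRingHom = OreLocalization.numeratorRingHom ∧
      Function.Bijective φ ∧
      ∀ ψ : OreLocalization (evenPart 𝒜 S) R →+* OreLocalization S R,
        ψ.comp OreLocalization.numeratorRingHom = OreLocalization.numeratorRingHom → ψ = φ := by
  -- units map for φ : elements of E are units in R[S⁻¹]
  let fS : evenPart 𝒜 S →* Units (OreLocalization S R) :=
    { toFun := fun s => numeratorUnit (⟨(s : R), s.2.1⟩ : S)
      map_one' := Units.ext (numeratorHom (S := S)).map_one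
      map_mul' := fun a b => Units.ext ((numeratorHom (S := S)).map_mul (a : R) (b : R)) }
  have hf : ∀ s : evenPart 𝒜 S, (numeratorRingHom (s : R) : OreLocalization S R) = fS s := fun s => rfl
  let φ : OreLocalization (evenPart 𝒜 S) R →+* OreLocalization S R := universalHom numeratorRingHom fS hf
  -- elements of S are units in R[E⁻¹]
  have hu : ∀ s : S, IsUnit (numeratorRingHom (s : R) : OreLocalization (evenPart 𝒜 S) R) := by
    intro s
    obtain ⟨i, hi⟩ := hS s s.2
    have hsq : ((s : R) * s) ∈ evenPart 𝒜 S :=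
      ⟨S.mul_mem s.2 s.2, i + i, ⟨i, rfl⟩, SetLike.mul_mem_graded hi hi⟩
    set u : Units (OreLocalization (evenPart 𝒜 S) R) := numeratorUnit (⟨(s : R) * s, hsq⟩ : evenPart 𝒜 S) with hu
    have huval : (u : OreLocalization (evenPart 𝒜 S) R) = numeratorHom ((s : R) * s) := rfl
    have hcom : numeratorHom (s : R) * (u : OreLocalization (evenPart 𝒜 S) R)
        = (u : OreLocalization (evenPart 𝒜 S) R) * numeratorHom (s : R) := by
      rw [huval, ← map_mul, ← map_mul, mul_assoc]
    have h2 : numeratorHom (s : R) * ((u⁻¹ : Units _) : OreLocalization (evenPart 𝒜 S) R)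
        = ((u⁻¹ : Units _) : OreLocalization (evenPart 𝒜 S) R) * numeratorHom (s : R) := by
      rw [Units.mul_inv_eq_iff_eq_mul, eq_comm, mul_assoc, Units.inv_mul_eq_iff_eq_mul]
      exact hcom
    refine ⟨⟨numeratorHom (s : R), ((u⁻¹ : Units _) : OreLocalization (evenPart 𝒜 S) R) * numeratorHom (s : R),
      ?_, ?_⟩, rfl⟩
    · rw [← mul_assoc, h2, mul_assoc, ← map_mul, ← huval, Units.inv_mul]
    · rw [mul_assoc, ← map_mul, ← huval, Units.inv_mul]
  let gS : S →* Units (OreLocalization (evenPart 𝒜 S) R) :=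
    { toFun := fun s => (hu s).unit
      map_one' := by
        ext
        simp [IsUnit.unit_spec, ← OreLocalization.one_def]
      map_mul' := fun a b => by
        ext
        simp [IsUnit.unit_spec, ← OreLocalization.one_def] }
  have hg : ∀ s : S, (numeratorRingHom (s : R) : OreLocalization (evenPart 𝒜 S) R) = gS s := fun s =>
    ((hu s).unit_spec).symm
  let χ : OreLocalization S R →+* OreLocalization (evenPart 𝒜 S) R := universalHom numeratorRingHom gS hg
  -- the two canonical unit maps needed for uniqueness of the identity
  let nUS : S →* Units (OreLocalization S R) :=
    { toFun := numeratorUnit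
      map_one' := Units.ext (numeratorHom (S := S)).map_one
      map_mul' := fun a b => Units.ext ((numeratorHom (S := S)).map_mul (a : R) (b : R)) }
  have hnS : ∀ s : S, (numeratorRingHom (s : R) : OreLocalization S R) = nUS s := fun s => rfl
  let nUE : evenPart 𝒜 S →* Units (OreLocalization (evenPart 𝒜 S) R) :=
    { toFun := numeratorUnit
      map_one' := Units.ext (numeratorHom (S := evenPart 𝒜 S)).map_one
      map_mul' := fun a b => Units.ext ((numeratorHom (S := evenPart 𝒜 S)).map_mul (a : R) (b : R)) }
  have hnE : ∀ s : evenPart 𝒜 S, (numeratorRingHom (s : R) : OreLocalization (evenPart 𝒜 S) R) = nUE s := fun s => rfl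
  have hφ : ∀ r : R, φ (numeratorHom r) = numeratorHom r := fun r =>
    universalHom_commutes numeratorRingHom fS hf
  have hχ : ∀ r : R, χ (numeratorHom r) = numeratorHom r := fun r =>
    universalHom_commutes numeratorRingHom gS hg
  have hφχ : φ.comp χ = RingHom.id _ := by
    rw [universalHom_unique numeratorRingHom nUS hnS (φ.comp χ)
      (fun r => by show φ (χ (numeratorHom r)) = numeratorRingHom r; rw [hχ r, hφ r]; rfl),
      universalHom_unique numeratorRingHom nUS hnS (RingHom.id _) (fun r => rfl)]
  have hχφ : χ.comp φ = RingHom.id _ := by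
    rw [universalHom_unique numeratorRingHom nUE hnE (χ.comp φ)
      (fun r => by show χ (φ (numeratorHom r)) = numeratorRingHom r; rw [hφ r, hχ r]; rfl),
      universalHom_unique numeratorRingHom nUE hnE (RingHom.id _) (fun r => rfl)]
  refine ⟨φ, ?_, ⟨?_, ?_⟩, ?_⟩
  · ext r
    exact hφ r
  · intro x y hxy
    have hx := congrArg (fun f : _ →+* _ => f x) hχφ
    have hy := congrArg (fun f : _ →+* _ => f y) hχφ
    simp only [RingHom.comp_apply, RingHom.id_apply] at hx hy
    rw [← hx, ← hy, hxy]
  · intro y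
    refine ⟨χ y, ?_⟩
    have := congrArg (fun f : _ →+* _ => f y) hφχ
    simpa using this
  · intro ψ hψ
    rw [universalHom_unique numeratorRingHom fS hf ψ
      (fun r => congrArg (fun f : _ →+* _ => f r) hψ)]
end

section
/- Let R be a ℤ-graded, graded-commutative ring, S a submonoid of R consisting of homogeneous elements, and S_ev the submonoid of those elements of S that are homogeneous of even degree. In the Ore localization R[S_ev⁻¹], two fractions are equal, r/s = r'/s' (with r, r' ∈ R and s, s' ∈ S_ev), if and only if there exists t ∈ S_ev such that r*s'*t = r'*s*t. -/
open scoped OreLocalization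

/-- An even-degree homogeneous element of a graded-commutative ring is central. -/
lemma evenPart_central {R : Type*} [Ring R] (𝒜 : ℤ → AddSubgroup R) [GradedRing 𝒜]
    (hcomm : IsGradedComm 𝒜) {s : R} {i : ℤ} (hi : Even i) (hsi : s ∈ 𝒜 i) (x : R) :
    s * x = x * s := by
  induction x using DirectSum.Decomposition.inductionOn 𝒜 with
  | zero => simp
  | homogeneous m => exact (hcomm hsi m.2).1 (hi.mul_right _)
  | add a b ha hb => rw [mul_add, add_mul, ha, hb]

/-- Let `R` be a ℤ-graded, graded-commutative ring, `S` a submonoid of homogeneous elements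
and `S_ev ⊆ S` the submonoid of even-degree elements.  In the Ore localization `R[S_ev⁻¹]`
two fractions are equal, `r /ₒ s = r' /ₒ s'`, if and only if there exists `t ∈ S_ev` with
`r * s' * t = r' * s * t`. -/
theorem oreDiv_eq_oreDiv_iff_evenPart {R : Type*} [Ring R]
    (𝒜 : ℤ → AddSubgroup R) [GradedRing 𝒜] (hcomm : IsGradedComm 𝒜)
    (S : Submonoid R) (hS : ∀ s ∈ S, SetLike.IsHomogeneousElem 𝒜 s)
    [OreLocalization.OreSet (evenPart 𝒜 S)] :
    ∀ (r r' : R) (s s' : evenPart 𝒜 S),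
      (r /ₒ s = r' /ₒ s') ↔ ∃ t ∈ evenPart 𝒜 S, r * (s' : R) * t = r' * (s : R) * t := by
  intro r r' s s'
  have cen : ∀ a : R, a ∈ evenPart 𝒜 S → ∀ x : R, a * x = x * a := by
    rintro a ⟨-, i, hi, hai⟩ x
    exact evenPart_central 𝒜 hcomm hi hai x
  obtain ⟨hsS, is, his, hsi⟩ := s.2
  obtain ⟨hs'S, is', his', hs'i⟩ := s'.2
  have cs : ∀ x : R, (s : R) * x = x * s := evenPart_central 𝒜 hcomm his hsi
  have cs' : ∀ x : R, (s' : R) * x = x * s' := evenPart_central 𝒜 hcomm his' hs'i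
  rw [OreLocalization.oreDiv_eq_iff]
  constructor
  · rintro ⟨u, v, h1, h2⟩
    refine ⟨u, u.2, ?_⟩
    have cu : ∀ x : R, (u : R) * x = x * u := cen u u.2
    have h1' : r' * (u : R) = v * r := by
      have := h1
      rw [Submonoid.smul_def, smul_eq_mul, smul_eq_mul, cu] at this
      exact this
    have hus' : (u : R) * (s' : R) ∈ evenPart 𝒜 S := (evenPart 𝒜 S).mul_mem u.2 s'.2
    calc r * (s' : R) * u = r * ((s' : R) * u) := mul_assoc _ _ _
      _ = r * ((u : R) * s') := by rw [← cu]
      _ = ((u : R) * s') * r := (cen _ hus' r).symm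
      _ = (v * (s : R)) * r := by rw [h2]
      _ = v * ((s : R) * r) := mul_assoc _ _ _
      _ = v * (r * s) := by rw [cs]
      _ = (v * r) * s := (mul_assoc _ _ _).symm
      _ = (r' * (u : R)) * s := by rw [← h1']
      _ = r' * ((u : R) * s) := mul_assoc _ _ _
      _ = r' * ((s : R) * u) := by rw [cu]
      _ = r' * (s : R) * u := (mul_assoc _ _ _).symm
  · rintro ⟨t, ht, hrt⟩
    have hst : (s : R) * t ∈ evenPart 𝒜 S := (evenPart 𝒜 S).mul_mem s.2 ht
    have hs't : (s' : R) * t ∈ evenPart 𝒜 S := (evenPart 𝒜 S).mul_mem s'.2 ht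
    have ct : ∀ x : R, t * x = x * t := cen t ht
    refine ⟨⟨(s : R) * t, hst⟩, (s' : R) * t, ?_, ?_⟩
    · show ((s : R) * t) • r' = ((s' : R) * t) • r
      rw [smul_eq_mul, smul_eq_mul]
      calc (s : R) * t * r' = r' * ((s : R) * t) := cen _ hst r'
        _ = r' * (s : R) * t := (mul_assoc _ _ _).symm
        _ = r * (s' : R) * t := hrt.symm
        _ = r * ((s' : R) * t) := mul_assoc _ _ _
        _ = (s' : R) * t * r := (cen _ hs't r).symm
    · show (s : R) * t * (s' : R) = (s' : R) * t * (s : R)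
      rw [cen _ hst (s' : R), cs t, ← mul_assoc]
end

section
/- In a ℤ-graded, graded-commutative ring every graded maximal ideal is a prime ideal: if 𝔪 is a proper homogeneous ideal that is maximal with respect to inclusion among proper homogeneous ideals, then for all a, b ∈ R, a*b ∈ 𝔪 implies a ∈ 𝔪 or b ∈ 𝔪. -/
open GradedRing DirectSum SetLike Finset

lemma homog_mul_mem_right {R : Type*} [Ring R] {𝒜 : ℤ → AddSubgroup R}
    (hcomm : IsGradedComm 𝒜) {𝔪 : Ideal R} {i j : ℤ} {r s : R}
    (hr : r ∈ 𝒜 i) (hs : s ∈ 𝒜 j) (h : s * r ∈ 𝔪) : r * s ∈ 𝔪 := by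
  obtain ⟨h1, h2⟩ := hcomm hr hs
  by_cases he : Even (i * j)
  · rw [h1 he]; exact h
  · rw [h2 he]; exact 𝔪.neg_mem h

/-- a homogeneous (left) ideal in a graded-commutative ring is two-sided -/
lemma mul_mem_right'' {R : Type*} [Ring R] (𝒜 : ℤ → AddSubgroup R) [GradedRing 𝒜]
    (hcomm : IsGradedComm 𝒜) {𝔪 : Ideal R} (hhom : Ideal.IsHomogeneous 𝒜 𝔪)
    {m : R} (hm : m ∈ 𝔪) (y : R) : m * y ∈ 𝔪 := by
  classical
  rw [← DirectSum.sum_support_decompose 𝒜 m, ← DirectSum.sum_support_decompose 𝒜 y,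
    Finset.sum_mul_sum]
  refine Ideal.sum_mem _ fun i _ => Ideal.sum_mem _ fun j _ => ?_
  exact homog_mul_mem_right hcomm (SetLike.coe_mem _) (SetLike.coe_mem _)
    (Ideal.mul_mem_left _ _ (hhom i hm))

lemma homog_case {R : Type*} [Ring R] (𝒜 : ℤ → AddSubgroup R)
    [GradedRing 𝒜] (hcomm : IsGradedComm 𝒜)
    (𝔪 : Ideal R) (hhom : Ideal.IsHomogeneous 𝒜 𝔪)
    (hmax : ∀ J : Ideal R, Ideal.IsHomogeneous 𝒜 J → 𝔪 ≤ J → J ≠ ⊤ → J = 𝔪)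
    {x : R} (hx : SetLike.IsHomogeneousElem 𝒜 x) (hxm : x ∉ 𝔪) {y : R}
    (hxy : x * y ∈ 𝔪) : y ∈ 𝔪 := by
  set J := 𝔪 ⊔ Ideal.span {x} with hJ
  have hJhom : Ideal.IsHomogeneous 𝒜 J :=
    hhom.sup (Ideal.homogeneous_span 𝒜 {x} (by rintro z rfl; exact hx))
  have hxJ : x ∈ J := Ideal.mem_sup_right (Ideal.subset_span rfl)
  have hJtop : J = ⊤ := by
    by_contra h
    exact hxm (hmax J hJhom le_sup_left h ▸ hxJ)
  have h1 : (1 : R) ∈ J := hJtop ▸ Submodule.mem_top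
  obtain ⟨m, hm, t, ht, hmt⟩ := Submodule.mem_sup.mp h1
  obtain ⟨a, rfl⟩ := Ideal.mem_span_singleton'.mp ht
  have : y = m * y + a * (x * y) := by
    rw [← mul_assoc, ← add_mul, hmt, one_mul]
  rw [this]
  exact Ideal.add_mem _ (mul_mem_right'' 𝒜 hcomm hhom hm y) (Ideal.mul_mem_left _ _ hxy)

/-- In a ℤ-graded, graded-commutative ring, every graded maximal ideal (a proper homogeneous
ideal which is maximal among proper homogeneous ideals) is prime. -/
theorem graded_maximal_is_prime {R : Type*} [Ring R] (𝒜 : ℤ → AddSubgroup R)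
    [GradedRing 𝒜] (hcomm : IsGradedComm 𝒜)
    (𝔪 : Ideal R) (hne : 𝔪 ≠ ⊤) (hhom : Ideal.IsHomogeneous 𝒜 𝔪)
    (hmax : ∀ J : Ideal R, Ideal.IsHomogeneous 𝒜 J → 𝔪 ≤ J → J ≠ ⊤ → J = 𝔪) :
    ∀ a b : R, a * b ∈ 𝔪 → a ∈ 𝔪 ∨ b ∈ 𝔪 := by
  have homogeneous_mem_or_mem : ∀ {x y : R}, IsHomogeneousElem 𝒜 x → IsHomogeneousElem 𝒜 y →
      x * y ∈ 𝔪 → x ∈ 𝔪 ∨ y ∈ 𝔪 := by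
    intro x y hx _ hxy
    by_cases hxm : x ∈ 𝔪
    · exact Or.inl hxm
    · exact Or.inr (homog_case 𝒜 hcomm 𝔪 hhom hmax hx hxm hxy)
  intro x y hxy
  by_contra! rid
  obtain ⟨rid₁, rid₂⟩ := rid
  classical
  set I := 𝔪
  set hI := hhom
  set set₁ := {i ∈ (decompose 𝒜 x).support | proj 𝒜 i x ∉ I} with set₁_eq
  set set₂ := {i ∈ (decompose 𝒜 y).support | proj 𝒜 i y ∉ I} with set₂_eq
  have nonempty :
    ∀ x : R, x ∉ I → {i ∈ (decompose 𝒜 x).support | proj 𝒜 i x ∉ I}.Nonempty := by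
    intro x hx
    rw [filter_nonempty_iff]
    contrapose! hx
    simp_rw [proj_apply] at hx
    rw [← sum_support_decompose 𝒜 x]
    exact Ideal.sum_mem _ hx
  set max₁ := set₁.max' (nonempty x rid₁)
  set max₂ := set₂.max' (nonempty y rid₂)
  have mem_max₁ : max₁ ∈ set₁ := max'_mem set₁ (nonempty x rid₁)
  have mem_max₂ : max₂ ∈ set₂ := max'_mem set₂ (nonempty y rid₂)
  replace hxy : proj 𝒜 (max₁ + max₂) (x * y) ∈ I := hI _ hxy
  have mem_I : proj 𝒜 max₁ x * proj 𝒜 max₂ y ∈ I := by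
    set antidiag :=
      {z ∈ (decompose 𝒜 x).support ×ˢ (decompose 𝒜 y).support | z.1 + z.2 = max₁ + max₂}
       with ha
    have mem_antidiag : (max₁, max₂) ∈ antidiag := by
      simp only [antidiag, add_sum_erase, mem_filter, mem_product]
      exact ⟨⟨mem_of_mem_filter _ mem_max₁, mem_of_mem_filter _ mem_max₂⟩, trivial⟩
    have eq_add_sum :=
      calc
        proj 𝒜 (max₁ + max₂) (x * y) = ∑ ij ∈ antidiag, proj 𝒜 ij.1 x * proj 𝒜 ij.2 y := by
          simp_rw [ha, proj_apply, DirectSum.decompose_mul, DirectSum.coe_mul_apply 𝒜]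
        _ =
            proj 𝒜 max₁ x * proj 𝒜 max₂ y +
              ∑ ij ∈ antidiag.erase (max₁, max₂), proj 𝒜 ij.1 x * proj 𝒜 ij.2 y :=
          (add_sum_erase _ _ mem_antidiag).symm
    rw [eq_sub_of_add_eq eq_add_sum.symm]
    refine Ideal.sub_mem _ hxy (Ideal.sum_mem _ fun z H => ?_)
    rcases z with ⟨i, j⟩
    simp only [antidiag, mem_erase, Prod.mk_inj, Ne, mem_filter, mem_product] at H
    rcases H with ⟨H₁, ⟨H₂, H₃⟩, H₄⟩
    have max_lt : max₁ < i ∨ max₂ < j := by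
      rcases lt_trichotomy max₁ i with (h | rfl | h)
      · exact Or.inl h
      · refine False.elim (H₁ ⟨rfl, add_left_cancel H₄⟩)
      · apply Or.inr
        have := add_lt_add_left h j
        rw [H₄] at this
        exact lt_of_add_lt_add_left this
    cases' max_lt with max_lt max_lt
    · have not_mem : i ∉ set₁ := fun h =>
        lt_irrefl _ ((max'_lt_iff set₁ (nonempty x rid₁)).mp max_lt i h)
      rw [set₁_eq] at not_mem
      simp only [not_and, Classical.not_not, Ne, mem_filter] at not_mem
      exact mul_mem_right'' 𝒜 hcomm hI (not_mem H₂) _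
    · have not_mem : j ∉ set₂ := fun h =>
        lt_irrefl _ ((max'_lt_iff set₂ (nonempty y rid₂)).mp max_lt j h)
      rw [set₂_eq] at not_mem
      simp only [not_and, Classical.not_not, Ne, mem_filter] at not_mem
      exact Ideal.mul_mem_left I _ (not_mem H₃)
  have mem_max₁' : proj 𝒜 max₁ x ∈ I ∨ proj 𝒜 max₂ y ∈ I :=
    homogeneous_mem_or_mem ⟨max₁, SetLike.coe_mem _⟩ ⟨max₂, SetLike.coe_mem _⟩ mem_I
  cases' mem_max₁' with h h
  · exact (mem_filter.mp mem_max₁).2 h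
  · exact (mem_filter.mp mem_max₂).2 h
end

section
/- Let R be a ℤ-graded, graded-commutative ring and let 𝔫 be the ideal of R generated by the homogeneous nilpotent elements. Then: (a) the quotient R/𝔫 is a commutative ring, i.e., a*b - b*a ∈ 𝔫 for all a, b ∈ R; and (b) 𝔫 is contained in every graded prime ideal of R. (Consequently, the graded prime spectrum of R coincides with that of the graded commutative ring R/𝔫.) -/
/-- Let `R` be a ℤ-graded, graded-commutative ring and let `𝔫` be the ideal generated by the
homogeneous nilpotent elements.  Then (a) the quotient `R/𝔫` is commutative, i.e.
`a * b - b * a ∈ 𝔫` for all `a b : R`, and (b) `𝔫` is contained in every graded prime ideal. -/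
theorem nilradical_ideal_properties {R : Type*} [Ring R]
    (𝒜 : ℤ → AddSubgroup R) [GradedRing 𝒜] (hcomm : IsGradedComm 𝒜) :
    (∀ a b : R, a * b - b * a ∈
        Ideal.span {x : R | SetLike.IsHomogeneousElem 𝒜 x ∧ IsNilpotent x}) ∧
    (∀ 𝔭 : Ideal R, 𝔭 ≠ ⊤ → Ideal.IsHomogeneous 𝒜 𝔭 →
        (∀ a b : R, a * b ∈ 𝔭 → a ∈ 𝔭 ∨ b ∈ 𝔭) →
        Ideal.span {x : R | SetLike.IsHomogeneousElem 𝒜 x ∧ IsNilpotent x} ≤ 𝔭) := by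
  set N : Ideal R := Ideal.span {x : R | SetLike.IsHomogeneousElem 𝒜 x ∧ IsNilpotent x} with hN
  constructor
  · -- part (a)
    -- key lemma for homogeneous elements
    have key : ∀ ⦃i j : ℤ⦄ ⦃r s : R⦄, r ∈ 𝒜 i → s ∈ 𝒜 j → r * s - s * r ∈ N := by
      intro i j r s hr hs
      by_cases hev : Even (i * j)
      · rw [(hcomm hr hs).1 hev, sub_self]; exact N.zero_mem
      · have h := (hcomm hr hs).2 hev
        have hsr : s * r = -(r * s) := by rw [h, neg_neg]
        have hii : ¬ Even (i * i) := by
          rw [Int.even_mul] at hev ⊢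
          tauto
        have h2rr : r * r + r * r = 0 := by
          exact add_eq_zero_iff_eq_neg.mpr ((hcomm hr hr).2 hii)
        have hnil : IsNilpotent (2 * (r * s)) := by
          refine ⟨2, ?_⟩
          calc (2 * (r * s)) ^ 2 = r * (s * r) * s * 4 := by noncomm_ring
            _ = -(((r * r + r * r) * (s * s)) * 2) := by rw [hsr]; noncomm_ring
            _ = 0 := by rw [h2rr]; noncomm_ring
        have hhom : SetLike.IsHomogeneousElem 𝒜 (2 * (r * s)) := by
          refine ⟨i + j, ?_⟩
          rw [two_mul]
          exact add_mem (SetLike.mul_mem_graded hr hs) (SetLike.mul_mem_graded hr hs)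
        have hmem : 2 * (r * s) ∈ N := Ideal.subset_span ⟨hhom, hnil⟩
        have : r * s - s * r = 2 * (r * s) := by rw [hsr]; noncomm_ring
        rw [this]; exact hmem
    intro a b
    induction a using DirectSum.Decomposition.inductionOn 𝒜 generalizing b with
    | zero => simp
    | homogeneous r =>
      induction b using DirectSum.Decomposition.inductionOn 𝒜 with
      | zero => simp
      | homogeneous s => exact key r.2 s.2
      | add m m' hm hm' =>
        have : (r : R) * (m + m') - (m + m') * r
            = ((r : R) * m - m * r) + ((r : R) * m' - m' * r) := by noncomm_ring
        rw [this]; exact N.add_mem hm hm'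
    | add m m' hm hm' =>
      have : (m + m') * b - b * (m + m') = (m * b - b * m) + (m' * b - b * m') := by
        noncomm_ring
      rw [this]; exact N.add_mem (hm b) (hm' b)
  · -- part (b)
    intro 𝔭 hne _ hprime
    haveI hP : 𝔭.IsPrime := ⟨hne, fun h => hprime _ _ h⟩
    rw [hN, Ideal.span_le]
    rintro x ⟨-, n, hn⟩
    exact hP.mem_of_pow_mem n (hn ▸ 𝔭.zero_mem)
end

section
/- Let k be a commutative ring and let A, B, M be cochain complexes of k-modules indexed by ℤ. Let α : A → M be any chain map and β : B → M a chain map which is degreewise surjective and a quasi-isomorphism. Form the degreewise pullback complex X with Xⁿ = {(a,b) ∈ Aⁿ × Bⁿ | α(a) = β(b)}, differential d(a,b) = (d a, d b), and projections p₁ : X → A and p₂ : X → B. Then p₁ is a quasi-isomorphism and, for every n ∈ ℤ, applying n-th cohomology to the pullback square yields a pullback square of k-modules: the canonical map Hⁿ(X) → {(ā, b̄) ∈ Hⁿ(A) × Hⁿ(B) | Hⁿ(α)(ā) = Hⁿ(β)(b̄)} induced by (Hⁿ(p₁), Hⁿ(p₂)) is bijective. -/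
open CategoryTheory HomologicalComplex

namespace PBQI
variable {k : Type*} [CommRing k]

abbrev csc (K : CochainComplex (ModuleCat k) ℤ) (n : ℤ) : ShortComplex (ModuleCat k) :=
  K.sc' (n-1) n (n+1)

noncomputable def hIso (K : CochainComplex (ModuleCat k) ℤ) (n : ℤ) :
    K.homology n ≅ (csc K n).moduleCatLeftHomologyData.H :=
  (K.homologyIsoSc' (n-1) n (n+1) (CochainComplex.prev ℤ n) (CochainComplex.next ℤ n)) ≪≫
    (csc K n).moduleCatHomologyIso

variable {K L : CochainComplex (ModuleCat k) ℤ}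

lemma d_comm (f : K ⟶ L) (i j : ℤ) (x : K.X i) :
    f.f j (K.d i j x) = L.d i j (f.f i x) := by
  have := ConcreteCategory.congr_hom (f.comm i j) x
  simp only [ConcreteCategory.comp_apply] at this
  exact this.symm

lemma ddz (K : CochainComplex (ModuleCat k) ℤ) (i j l : ℤ) (x : K.X i) :
    K.d j l (K.d i j x) = 0 := by
  have := ConcreteCategory.congr_hom (K.d_comp_d i j l) x
  simp only [ConcreteCategory.comp_apply] at this
  exact this

lemma d_cast (K : CochainComplex (ModuleCat k) ℤ) {a b b' : ℤ} (h : b = b') (x : K.X a) :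
    K.d a b x = 0 ↔ K.d a b' x = 0 := by subst h; exact Iff.rfl

def phiK (f : K ⟶ L) (n : ℤ) :
    (csc K n).moduleCatLeftHomologyData.K ⟶ (csc L n).moduleCatLeftHomologyData.K :=
  ModuleCat.ofHom (LinearMap.restrict (f.f n).hom (fun x hx => by
    show L.d n (n+1) (f.f n x) = 0
    rw [← d_comm f n (n+1) x, show K.d n (n+1) x = 0 from hx, map_zero]))

@[simp] lemma phiK_coe (f : K ⟶ L) (n : ℤ) (z : (csc K n).moduleCatLeftHomologyData.K) :
    (phiK f n z).1 = f.f n z.1 := rfl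

lemma phiK_range (f : K ⟶ L) (n : ℤ) :
    ∀ z ∈ LinearMap.range (csc K n).moduleCatToCycles,
      phiK f n z ∈ LinearMap.range (csc L n).moduleCatToCycles := by
  rintro _ ⟨y, rfl⟩
  exact ⟨f.f (n-1) y, Subtype.ext (d_comm f (n-1) n y).symm⟩

noncomputable def phiH (f : K ⟶ L) (n : ℤ) :
    (csc K n).moduleCatLeftHomologyData.H ⟶ (csc L n).moduleCatLeftHomologyData.H :=
  ModuleCat.ofHom (Submodule.mapQ _ _ (phiK f n).hom (fun z hz => phiK_range f n z hz))

@[simp] lemma phiH_mk (f : K ⟶ L) (n : ℤ) (z : LinearMap.ker (csc K n).g.hom) :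
    phiH f n (Submodule.Quotient.mk z) = Submodule.Quotient.mk (phiK f n z) :=
  rfl

noncomputable def lhmd (f : K ⟶ L) (n : ℤ) :
    ShortComplex.LeftHomologyMapData
      ((shortComplexFunctor' (ModuleCat k) (ComplexShape.up ℤ) (n-1) n (n+1)).map f)
      (csc K n).moduleCatLeftHomologyData (csc L n).moduleCatLeftHomologyData where
  φK := phiK f n
  φH := phiH f n
  commi := by ext z; rfl
  commf' := by
    ext y
    apply Subtype.ext
    show f.f n (K.d (n-1) n y) = L.d (n-1) n (f.f (n-1) y)
    exact d_comm f (n-1) n y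
  commπ := by
    ext z
    show phiH f n (Submodule.Quotient.mk z) = Submodule.Quotient.mk (phiK f n z)
    rfl

lemma hIso_comm (f : K ⟶ L) (n : ℤ) :
    homologyMap f n ≫ (hIso L n).hom = (hIso K n).hom ≫ phiH f n := by
  have nat := (natIsoSc' (ModuleCat k) (ComplexShape.up ℤ) (n-1) n (n+1)
    (CochainComplex.prev ℤ n) (CochainComplex.next ℤ n)).hom.naturality f
  simp only [hIso, Iso.trans_hom]
  dsimp [homologyIsoSc', ShortComplex.moduleCatHomologyIso, isoSc']
  erw [← Category.assoc,
    show homologyMap f n ≫ ShortComplex.homologyMap ((natIsoSc' (ModuleCat k)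
        (ComplexShape.up ℤ) (n-1) n (n+1) (CochainComplex.prev ℤ n)
        (CochainComplex.next ℤ n)).hom.app L) =
      ShortComplex.homologyMap ((natIsoSc' (ModuleCat k) (ComplexShape.up ℤ) (n-1) n (n+1)
        (CochainComplex.prev ℤ n) (CochainComplex.next ℤ n)).hom.app K) ≫
      ShortComplex.homologyMap
        ((shortComplexFunctor' (ModuleCat k) (ComplexShape.up ℤ) (n-1) n (n+1)).map f) from by
      rw [← ShortComplex.homologyMap_comp, ← nat, ShortComplex.homologyMap_comp]; rfl,
    Category.assoc, (lhmd f n).homologyMap_comm, Category.assoc]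
  rfl

lemma hIso_comm_apply (f : K ⟶ L) (n : ℤ) (x : K.homology n) :
    (hIso L n).hom (homologyMap f n x) = phiH f n ((hIso K n).hom x) := by
  have := ConcreteCategory.congr_hom (hIso_comm f n) x
  simpa [comp_apply] using this

lemma iso_bij {M N : ModuleCat k} (e : M ≅ N) : Function.Bijective e.hom := by
  refine Function.bijective_iff_has_inverse.mpr ⟨e.inv, fun x => ?_, fun x => ?_⟩
  · have := ConcreteCategory.congr_hom e.hom_inv_id x
    simp only [comp_apply, id_apply] at this
    exact this
  · have := ConcreteCategory.congr_hom e.inv_hom_id x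
    simp only [comp_apply, id_apply] at this
    exact this

lemma bij_of_isIso {M N : ModuleCat k} (f : M ⟶ N) [IsIso f] : Function.Bijective f :=
  iso_bij (asIso f)

lemma bij_phiH_of (f : K ⟶ L) (n : ℤ) (hf : Function.Bijective (homologyMap f n)) :
    Function.Bijective (phiH f n) := by
  have h1 : Function.Bijective ((phiH f n) ∘ (hIso K n).hom) := by
    have : ((phiH f n) ∘ (hIso K n).hom) = ((hIso L n).hom ∘ (homologyMap f n)) := by
      funext y; exact (hIso_comm_apply f n y).symm
    rw [this]
    exact (iso_bij (hIso L n)).comp hf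
  exact (Function.Bijective.of_comp_iff _ (iso_bij (hIso K n))).mp h1

lemma isIso_phiH (f : K ⟶ L) (n : ℤ) (h : Function.Bijective (phiH f n)) :
    IsIso (phiH f n) := by
  let e := LinearEquiv.ofBijective (phiH f n).hom h
  refine ⟨ModuleCat.ofHom e.symm.toLinearMap, ?_, ?_⟩
  · ext x
    show e.symm (phiH f n x) = x
    exact e.symm_apply_apply x
  · ext x
    show phiH f n (e.symm x) = x
    exact e.apply_symm_apply x

lemma isIso_homologyMap_of (f : K ⟶ L) (n : ℤ) (h : Function.Bijective (phiH f n)) :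
    IsIso (homologyMap f n) := by
  have : homologyMap f n = (hIso K n).hom ≫ phiH f n ≫ (hIso L n).inv := by
    rw [← Category.assoc, ← hIso_comm, Category.assoc, Iso.hom_inv_id, Category.comp_id]
  rw [this]
  have := isIso_phiH f n h
  infer_instance


section Quot
variable (K : CochainComplex (ModuleCat k) ℤ) (n : ℤ)

lemma H_repr (h : (csc K n).moduleCatLeftHomologyData.H) :
    ∃ (x : K.X n) (hx : K.d n (n+1) x = 0),
      h = Submodule.Quotient.mk ⟨x, hx⟩ := by
  obtain ⟨⟨x, hx⟩, rfl⟩ := Submodule.Quotient.mk_surjective _ h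
  exact ⟨x, hx, rfl⟩

lemma mk_eq_zero_iff (x : K.X n) (hx : K.d n (n+1) x = 0) :
    (Submodule.Quotient.mk ⟨x, hx⟩ : (csc K n).moduleCatLeftHomologyData.H) = 0 ↔
      ∃ y : K.X (n-1), K.d (n-1) n y = x := by
  rw [Submodule.Quotient.mk_eq_zero]
  constructor
  · rintro ⟨y, hy⟩
    exact ⟨y, congrArg Subtype.val hy⟩
  · rintro ⟨y, hy⟩
    exact ⟨y, Subtype.ext hy⟩

lemma mk_eq_mk_iff (x₁ x₂ : K.X n) (hx₁ : K.d n (n+1) x₁ = 0) (hx₂ : K.d n (n+1) x₂ = 0) :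
    (Submodule.Quotient.mk ⟨x₁, hx₁⟩ : (csc K n).moduleCatLeftHomologyData.H) =
        Submodule.Quotient.mk ⟨x₂, hx₂⟩ ↔
      ∃ y : K.X (n-1), K.d (n-1) n y = x₁ - x₂ := by
  rw [Submodule.Quotient.eq]
  constructor
  · rintro ⟨y, hy⟩
    have := congrArg Subtype.val hy
    rw [AddSubgroupClass.coe_sub] at this
    exact ⟨y, this⟩
  · rintro ⟨y, hy⟩
    refine ⟨y, Subtype.ext ?_⟩
    rw [AddSubgroupClass.coe_sub]
    exact hy

end Quot

lemma phiH_mk' {K L : CochainComplex (ModuleCat k) ℤ} (f : K ⟶ L) (n : ℤ)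
    (x : K.X n) (hx : K.d n (n+1) x = 0) (hx2 : L.d n (n+1) (f.f n x) = 0) :
    phiH f n (Submodule.Quotient.mk ⟨x, hx⟩) = Submodule.Quotient.mk ⟨f.f n x, hx2⟩ := by
  rw [phiH_mk]
  exact congrArg _ (Subtype.ext rfl)

section Core

variable (A B M X : CochainComplex (ModuleCat k) ℤ)
  (α : A ⟶ M) (β : B ⟶ M) (p₁ : X ⟶ A) (p₂ : X ⟶ B)

lemma core
    (hβsurj : ∀ m : ℤ, Function.Surjective (β.f m))
    (hsq' : ∀ (m : ℤ) (x : X.X m), α.f m (p₁.f m x) = β.f m (p₂.f m x))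
    (hpbinj : ∀ (m : ℤ) (x y : X.X m), p₁.f m x = p₁.f m y → p₂.f m x = p₂.f m y → x = y)
    (hpbsurj : ∀ (m : ℤ) (a : A.X m) (b : B.X m), α.f m a = β.f m b →
        ∃ x, p₁.f m x = a ∧ p₂.f m x = b)
    (Hβbij : ∀ m : ℤ, Function.Bijective (phiH β m))
    (n : ℤ) : Function.Bijective (phiH p₁ n) := by
  constructor
  · -- injectivity
    suffices h0 : ∀ h, phiH p₁ n h = 0 → h = 0 by
      intro h₁ h₂ he
      exact sub_eq_zero.mp (h0 (h₁ - h₂) (by rw [map_sub, he, sub_self]))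
    intro h hh
    obtain ⟨x, hxc, rfl⟩ := H_repr X n h
    have hp1c : A.d n (n+1) (p₁.f n x) = 0 := by
      rw [← d_comm p₁ n (n+1) x, hxc, map_zero]
    erw [phiH_mk' p₁ n x hxc hp1c, mk_eq_zero_iff] at hh
    obtain ⟨a', ha'1⟩ := hh
    have hp2c : B.d n (n+1) (p₂.f n x) = 0 := by
      rw [← d_comm p₂ n (n+1) x, hxc, map_zero]
    have hker : phiH β n (Submodule.Quotient.mk ⟨p₂.f n x, hp2c⟩) = 0 := by
      have hM : M.d n (n+1) (β.f n (p₂.f n x)) = 0 := by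
        rw [← d_comm β n (n+1) _, hp2c, map_zero]
      erw [phiH_mk' β n _ hp2c hM, mk_eq_zero_iff]
      refine ⟨α.f (n-1) a', ?_⟩
      rw [← d_comm α (n-1) n a', ha'1, hsq' n x]
    have hz : Submodule.Quotient.mk (⟨p₂.f n x, hp2c⟩ : LinearMap.ker (csc B n).g.hom) = 0 :=
      (Hβbij n).1 (by rw [hker]; exact (map_zero _).symm)
    rw [mk_eq_zero_iff] at hz
    obtain ⟨b', hb'1⟩ := hz
    have hu : M.d (n-1) n (β.f (n-1) b' - α.f (n-1) a') = 0 := by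
      rw [map_sub, ← d_comm β (n-1) n b', ← d_comm α (n-1) n a', hb'1, ha'1,
        hsq' n x, sub_self]
    have hu' : M.d (n-1) (n-1+1) (β.f (n-1) b' - α.f (n-1) a') = 0 :=
      (d_cast M (by ring) _).mpr hu
    obtain ⟨hclass, hcl⟩ := (Hβbij (n-1)).2 (Submodule.Quotient.mk ⟨_, hu'⟩)
    obtain ⟨c, hcc, rfl⟩ := H_repr B (n-1) hclass
    have hcc' : B.d (n-1) n c = 0 := (d_cast B (by ring) c).mp hcc
    have hβc : M.d (n-1) (n-1+1) (β.f (n-1) c) = 0 := by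
      rw [← d_comm β (n-1) (n-1+1) c, hcc, map_zero]
    erw [phiH_mk' β (n-1) c hcc hβc, mk_eq_mk_iff] at hcl
    obtain ⟨w, hw1⟩ := hcl
    obtain ⟨e, rfl⟩ := hβsurj (n-1-1) w
    have hab : α.f (n-1) a' = β.f (n-1) (b' - c + B.d (n-1-1) (n-1) e) := by
      rw [map_add, map_sub, d_comm β (n-1-1) (n-1) e, hw1]
      abel
    obtain ⟨x', hx'1, hx'2⟩ := hpbsurj (n-1) a' _ hab
    have hdx' : X.d (n-1) n x' = x := by
      apply hpbinj n
      · rw [d_comm p₁ (n-1) n x', hx'1]; exact ha'1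
      · rw [d_comm p₂ (n-1) n x', hx'2, map_add, map_sub, hb'1, hcc',
          show B.d (n-1) n (B.d (n-1-1) (n-1) e) = 0 from ddz B _ _ _ e]
        abel
    erw [mk_eq_zero_iff]
    exact ⟨x', hdx'⟩
  · -- surjectivity
    intro h
    obtain ⟨a, hac, rfl⟩ := H_repr A n h
    have hMa : M.d n (n+1) (α.f n a) = 0 := by
      rw [← d_comm α n (n+1) a, hac, map_zero]
    obtain ⟨hb, hhb⟩ := (Hβbij n).2 (Submodule.Quotient.mk ⟨α.f n a, hMa⟩)
    obtain ⟨b, hbc, rfl⟩ := H_repr B n hb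
    have hMb : M.d n (n+1) (β.f n b) = 0 := by
      rw [← d_comm β n (n+1) b, hbc, map_zero]
    erw [phiH_mk' β n b hbc hMb, mk_eq_mk_iff] at hhb
    obtain ⟨m, hm1⟩ := hhb
    obtain ⟨b', rfl⟩ := hβsurj (n-1) m
    have key : α.f n a = β.f n (b - B.d (n-1) n b') := by
      rw [map_sub, d_comm β (n-1) n b', hm1]
      abel
    obtain ⟨x, hx1, hx2⟩ := hpbsurj n a _ key
    have hdx : X.d n (n+1) x = 0 := by
      apply hpbinj (n+1) _ 0
      · rw [map_zero, d_comm p₁ n (n+1) x, hx1]; exact hac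
      · rw [map_zero, d_comm p₂ n (n+1) x, hx2, map_sub, hbc,
          show B.d n (n+1) (B.d (n-1) n b') = 0 from ddz B _ _ _ b']
        abel
    refine ⟨Submodule.Quotient.mk ⟨x, hdx⟩, ?_⟩
    have hp1c : A.d n (n+1) (p₁.f n x) = 0 := by
      rw [← d_comm p₁ n (n+1) x, hdx, map_zero]
    rw [phiH_mk' p₁ n x hdx hp1c]
    exact congrArg _ (Subtype.ext hx1)

end Core

end PBQI


open PBQI

/-- Let `k` be a commutative ring, `A`, `B`, `M` cochain complexes of `k`-modules,
`α : A ⟶ M` any chain map and `β : B ⟶ M` a degreewise surjective quasi-isomorphism.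
Let `X` be a degreewise pullback of `α` and `β`, i.e. a complex equipped with chain maps
`p₁ : X ⟶ A`, `p₂ : X ⟶ B` with `p₁ ≫ α = p₂ ≫ β` such that in each degree `n` the induced
map `Xⁿ → {(a, b) ∈ Aⁿ × Bⁿ | α a = β b}` is bijective.  Then `p₁` is a quasi-isomorphism
and, for every `n`, the induced map `Hⁿ(X) → {(ā, b̄) ∈ Hⁿ(A) × Hⁿ(B) | Hⁿ(α) ā = Hⁿ(β) b̄}`
is bijective. -/
theorem homology_of_pullback_along_surjective_quasiIso {k : Type*} [CommRing k]
    (A B M : CochainComplex (ModuleCat k) ℤ) (α : A ⟶ M) (β : B ⟶ M)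
    (hβsurj : ∀ n : ℤ, Function.Surjective (β.f n)) [QuasiIso β]
    (X : CochainComplex (ModuleCat k) ℤ) (p₁ : X ⟶ A) (p₂ : X ⟶ B)
    (hsq : p₁ ≫ α = p₂ ≫ β)
    (hpb : ∀ n : ℤ,
      Function.Injective (fun x : X.X n => ((p₁.f n) x, (p₂.f n) x)) ∧
      Set.range (fun x : X.X n => ((p₁.f n) x, (p₂.f n) x)) =
        {q : A.X n × B.X n | (α.f n) q.1 = (β.f n) q.2}) :
    QuasiIso p₁ ∧
    ∀ n : ℤ,
      Function.Injective
        (fun x : X.homology n => ((homologyMap p₁ n) x, (homologyMap p₂ n) x)) ∧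
      Set.range (fun x : X.homology n => ((homologyMap p₁ n) x, (homologyMap p₂ n) x)) =
        {q : A.homology n × B.homology n |
          (homologyMap α n) q.1 = (homologyMap β n) q.2} := by
  
  have hsq' : ∀ (m : ℤ) (x : X.X m), α.f m (p₁.f m x) = β.f m (p₂.f m x) := by
    intro m x
    have h1 := congrArg (fun φ => HomologicalComplex.Hom.f φ m) hsq
    simp only [HomologicalComplex.comp_f] at h1
    have := ConcreteCategory.congr_hom h1 x
    simp only [ConcreteCategory.comp_apply] at this
    exact this
  have hpbinj : ∀ (m : ℤ) (x y : X.X m), p₁.f m x = p₁.f m y → p₂.f m x = p₂.f m y → x = y := by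
    intro m x y h1 h2
    exact (hpb m).1 (show (_, _) = (_, _) by rw [h1, h2])
  have hpbsurj : ∀ (m : ℤ) (a : A.X m) (b : B.X m), α.f m a = β.f m b →
      ∃ x, p₁.f m x = a ∧ p₂.f m x = b := by
    intro m a b hab
    have : (a, b) ∈ Set.range (fun x : X.X m => ((p₁.f m) x, (p₂.f m) x)) := by
      rw [(hpb m).2]; exact hab
    obtain ⟨x, hx⟩ := this
    exact ⟨x, congrArg Prod.fst hx, congrArg Prod.snd hx⟩
  have Hβbij : ∀ m : ℤ, Function.Bijective (phiH β m) := by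
    intro m
    have h1 : QuasiIsoAt β m := inferInstance
    have h2 : IsIso (homologyMap β m) := by rwa [quasiIsoAt_iff_isIso_homologyMap] at h1
    exact bij_phiH_of β m (bij_of_isIso _)
  have hcore : ∀ n, Function.Bijective (phiH p₁ n) :=
    core A B M X α β p₁ p₂ hβsurj hsq' hpbinj hpbsurj Hβbij
  have hq : QuasiIso p₁ := by
    rw [quasiIso_iff]
    intro i
    rw [quasiIsoAt_iff_isIso_homologyMap]
    exact isIso_homologyMap_of p₁ i (hcore i)
  refine ⟨hq, fun n => ?_⟩
  haveI := hq
  have bij1 : Function.Bijective (homologyMap p₁ n) := by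
    have h1 : QuasiIsoAt p₁ n := inferInstance
    have h2 : IsIso (homologyMap p₁ n) := by rwa [quasiIsoAt_iff_isIso_homologyMap] at h1
    exact bij_of_isIso _
  have bijβ : Function.Bijective (homologyMap β n) := by
    have h1 : QuasiIsoAt β n := inferInstance
    have h2 : IsIso (homologyMap β n) := by rwa [quasiIsoAt_iff_isIso_homologyMap] at h1
    exact bij_of_isIso _
  have hHsq : ∀ x : X.homology n,
      homologyMap α n (homologyMap p₁ n x) = homologyMap β n (homologyMap p₂ n x) := by
    intro x
    have h1 := congrArg (fun φ => homologyMap φ n) hsq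
    simp only [homologyMap_comp] at h1
    have := ConcreteCategory.congr_hom h1 x
    simp only [ConcreteCategory.comp_apply] at this
    exact this
  constructor
  · intro x y hxy
    exact bij1.1 (congrArg Prod.fst hxy)
  · apply Set.Subset.antisymm
    · rintro q ⟨x, rfl⟩
      exact hHsq x
    · rintro ⟨ha, hb⟩ hmem
      obtain ⟨x, hx⟩ := bij1.2 ha
      have h2 : homologyMap β n (homologyMap p₂ n x) = homologyMap β n hb := by
        rw [← hHsq x, hx]; exact hmem
      exact ⟨x, by rw [Prod.mk.injEq]; exact ⟨hx, bijβ.1 h2⟩⟩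
end
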